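/- Let d ≥ 2, σ > 0 and K > 0, and write L = log(K/d). Consider the d×d real matrix M with entries: M_{i1} = −σ²K/d for all i = 1,…,d; M_{1j} = (1 − L)·d/K for j = 2,…,d; M_{ii} = −(1 − L)·d/K for i = 2,…,d; and M_{ij} = 0 for all other entries (i ≠ j, i,j ≥ 2, and i ≠ 1). Then det M = (−1)^d σ² K [ (1 − L) d/K ]^{d−1}. Consequently det M = 0 if and only if K = d·e, i.e. the non-focality condition for the fully symmetric d-asset Black–Scholes basket fails exactly at strike K* = d·e. -/

import Mathlib

open Real Matrix

/-- For the fully symmetric `d`-asset Black–Scholes basket, the focality matrix `M`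
(with first column entries `-σ²K/d`, first-row off-diagonal entries `(1-L)d/K`,
remaining diagonal entries `-(1-L)d/K`, `L = log(K/d)`, and zeros elsewhere) has
determinant `(-1)^d σ² K [(1-L) d/K]^{d-1}`, which vanishes iff `K = d·e`. -/
theorem stmt_17 (d : ℕ) (hd : 2 ≤ d) (σ K : ℝ) (hσ : 0 < σ) (hK : 0 < K) :
    let L : ℝ := Real.log (K / d)
    let M : Matrix (Fin d) (Fin d) ℝ := fun i j =>
      if j.val = 0 then -(σ ^ 2 * K / d)
      else if i.val = 0 then (1 - L) * d / K
      else if i = j then -((1 - L) * d / K)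
      else 0
    M.det = (-1) ^ d * σ ^ 2 * K * ((1 - L) * d / K) ^ (d - 1) ∧
    (M.det = 0 ↔ K = d * Real.exp 1) := by
  intro L M
  obtain ⟨e, rfl⟩ : ∃ e, d = e + 2 := ⟨d - 2, by omega⟩
  set a : ℝ := -(σ ^ 2 * K / (e + 2 : ℕ)) with ha
  set b : ℝ := (1 - L) * (e + 2 : ℕ) / K with hb
  set u : Fin (e + 2) → ℝ := fun i => if i.val = 0 then 0 else 1 with hu
  set v : Fin (e + 2) → ℝ := fun i => if i.val = 0 then 1 else 0 with hv
  set P : Matrix (Fin (e + 2)) (Fin (e + 2)) ℝ := 1 + replicateCol Unit v * replicateRow Unit u with hP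
  have hdetP : P.det = 1 := by
    rw [hP, det_one_add_replicateCol_mul_replicateRow]
    have : u ⬝ᵥ v = 0 := by
      refine Finset.sum_eq_zero fun x _ => ?_
      simp only [hu, hv]
      split_ifs <;> simp
    rw [this, add_zero]
  have hsum : ∀ j : Fin (e + 2),
      (∑ x, u x * M x j) = if j.val = 0 then ((e + 1 : ℕ) : ℝ) * a else -b := by
    intro j
    by_cases hj : (j : ℕ) = 0
    · rw [if_pos hj, Fin.sum_univ_succ]
      have h0 : u 0 * M 0 j = 0 := by simp [hu]
      have hsucc : ∀ i : Fin (e + 1), u i.succ * M i.succ j = a := by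
        intro i
        have hi : (i.succ : ℕ) ≠ 0 := by simp [Fin.val_succ]
        simp [-Fin.val_eq_zero_iff, hu, hi, M, hj, ha]
      rw [h0, zero_add, Finset.sum_congr rfl (fun i _ => hsucc i), Finset.sum_const]
      simp [nsmul_eq_mul]
    · rw [if_neg hj, Fin.sum_univ_succ]
      have hj' : j ≠ 0 := by
        intro h; exact hj (by simp [h])
      obtain ⟨j', rfl⟩ := Fin.exists_succ_eq.mpr hj'
      have h0 : u 0 * M 0 j'.succ = 0 := by simp [hu]
      have hsucc : ∀ i : Fin (e + 1),
          u i.succ * M i.succ j'.succ = if i = j' then -b else 0 := by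
        intro i
        have hi : (i.succ : ℕ) ≠ 0 := by simp [Fin.val_succ]
        have hjv : (j'.succ : ℕ) ≠ 0 := by simp [Fin.val_succ]
        by_cases hij : i = j'
        · simp [hu, hi, hjv, M, hij, hb]
        · have : i.succ ≠ j'.succ := fun h => hij (Fin.succ_injective _ h)
          simp [hu, hi, hjv, M, this, hij]
      rw [h0, zero_add, Finset.sum_congr rfl (fun i _ => hsucc i),
        Finset.sum_ite_eq' Finset.univ j' (fun _ => -b)]
      simp
  set T : Matrix (Fin (e + 2)) (Fin (e + 2)) ℝ := fun i j =>
    if i.val = 0 then (if j.val = 0 then ((e + 2 : ℕ) : ℝ) * a else 0) else M i j with hT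
  have hPM : P * M = T := by
    have key : ∀ i j, (P * M) i j = M i j + v i * ∑ x, u x * M x j := by
      intro i j
      rw [hP, Matrix.add_mul, Matrix.one_mul, Matrix.add_apply, Matrix.mul_assoc]
      congr 1
      rw [Matrix.mul_apply]
      simp [Matrix.mul_apply, Finset.mul_sum]
    ext i j
    rw [key, hsum]
    by_cases hi : (i : ℕ) = 0
    · by_cases hj : (j : ℕ) = 0
      · have hM : M i j = a := by simp [-Fin.val_eq_zero_iff, M, hj, ha]
        simp only [hT, hi, hj, if_pos, hv, hM]
        push_cast
        ring
      · have hM : M i j = b := by simp [-Fin.val_eq_zero_iff, M, hj, hi, hb]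
        simp [-Fin.val_eq_zero_iff, hT, hi, hj, hv, hM]
    · simp [-Fin.val_eq_zero_iff, hT, hi, hv]
  have hTtri : T.BlockTriangular OrderDual.toDual := by
    intro i j hij
    have hij' : i < j := hij
    have hj : (j : ℕ) ≠ 0 := by
      have := Fin.lt_iff_val_lt_val.mp hij'
      omega
    by_cases hi : (i : ℕ) = 0
    · simp [-Fin.val_eq_zero_iff, hT, hi, hj]
    · have hne : i ≠ j := ne_of_lt hij'
      simp [-Fin.val_eq_zero_iff, hT, hi, hj, M, hne]
  have hdetT : T.det = (((e + 2 : ℕ) : ℝ) * a) * (-b) ^ (e + 1) := by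
    rw [det_of_lowerTriangular T hTtri, Fin.prod_univ_succ]
    have h0 : T 0 0 = ((e + 2 : ℕ) : ℝ) * a := by simp [hT]
    have hs : ∀ i : Fin (e + 1), T i.succ i.succ = -b := by
      intro i
      have hi : (i.succ : ℕ) ≠ 0 := by simp [Fin.val_succ]
      simp [hT, hi, M, hb]
    rw [h0, Finset.prod_congr rfl (fun i _ => hs i), Finset.prod_const]
    simp
  have hdetM : M.det = (((e + 2 : ℕ) : ℝ) * a) * (-b) ^ (e + 1) := by
    have := congrArg Matrix.det hPM
    rwa [Matrix.det_mul, hdetP, one_mul, hdetT] at this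
  have hdpos : (0 : ℝ) < ((e + 2 : ℕ) : ℝ) := by positivity
  have hformula : M.det = (-1) ^ (e + 2) * σ ^ 2 * K * b ^ (e + 2 - 1) := by
    rw [hdetM, ha, neg_pow]
    have : ((e + 2 : ℕ) : ℝ) * -(σ ^ 2 * K / ((e + 2 : ℕ) : ℝ)) = -(σ ^ 2 * K) := by
      field_simp
    rw [this]
    have h21 : e + 2 - 1 = e + 1 := rfl
    rw [h21, pow_succ (-1 : ℝ) (e + 1)]
    ring
  refine ⟨hformula, ?_⟩
  rw [hformula]
  have hK' : K ≠ 0 := ne_of_gt hK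
  have hd' : ((e + 2 : ℕ) : ℝ) ≠ 0 := ne_of_gt hdpos
  have hc : ((-1 : ℝ) ^ (e + 2) * σ ^ 2 * K) ≠ 0 :=
    mul_ne_zero (mul_ne_zero (pow_ne_zero _ (by norm_num)) (by positivity)) hK'
  have hKd : (0 : ℝ) < K / ((e + 2 : ℕ) : ℝ) := by positivity
  have hL : L = 1 ↔ K = ((e + 2 : ℕ) : ℝ) * Real.exp 1 := by
    constructor
    · intro h
      have h2 := congrArg Real.exp h
      rw [show L = Real.log (K / ((e + 2 : ℕ) : ℝ)) from rfl, Real.exp_log hKd] at h2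
      field_simp at h2
      rw [h2]
    · intro h
      rw [show L = Real.log (K / ((e + 2 : ℕ) : ℝ)) from rfl, h, mul_comm, mul_div_assoc,
        div_self hd', mul_one, Real.log_exp]
  have hb0 : b = 0 ↔ K = ((e + 2 : ℕ) : ℝ) * Real.exp 1 := by
    rw [hb, div_eq_zero_iff, or_iff_left hK', mul_eq_zero, or_iff_left hd',
      sub_eq_zero, eq_comm]
    exact hL
  rw [mul_eq_zero, pow_eq_zero_iff (by norm_num : e + 2 - 1 ≠ 0)]
  exact (or_iff_right hc).trans hb0
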